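/- The function g(x) := ((sin x)/x − (2 + cos x)/3)/(sin x − x·cos x), equivalently g(x) = (3·sin x − x·cos x − 2x)/(3x·sin x − 3x²·cos x), is strictly decreasing on the open interval (0, π/2). -/

import Mathlib

open Real Set
set_option maxHeartbeats 1000000

private lemma aux_nonneg {f f' : ℝ → ℝ} (hf : ∀ t, HasDerivAt f (f' t) t) (h0 : f 0 = 0)
    (hf' : ∀ t, 0 ≤ t → 0 ≤ f' t) {x : ℝ} (hx : 0 ≤ x) : 0 ≤ f x := by
  have hm : MonotoneOn f (Set.Ici (0:ℝ)) := by
    apply monotoneOn_of_deriv_nonneg (convex_Ici 0)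
      (fun t _ => (hf t).continuousAt.continuousWithinAt)
      (fun t _ => (hf t).differentiableAt.differentiableWithinAt)
    intro t ht
    rw [interior_Ici] at ht
    rw [(hf t).deriv]
    exact hf' t ht.le
  calc (0:ℝ) = f 0 := h0.symm
  _ ≤ f x := hm Set.self_mem_Ici hx hx

private lemma sin_ge3 {x : ℝ} (hx : 0 ≤ x) : x - x^3/6 ≤ sin x := by
  have h := aux_nonneg (f := fun t => Real.sin t - (t - t^3/6))
    (f' := fun t => Real.cos t - (1 - t^2/2)) (fun t => by
      have := (Real.hasDerivAt_sin t).sub ((hasDerivAt_id t).sub ((hasDerivAt_pow 3 t).div_const 6))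
      exact this.congr_deriv (by simp; ring))
    (by simp) (fun t _ => by nlinarith [Real.one_sub_sq_div_two_le_cos (x := t)]) hx
  simpa using h

private lemma cos_le4 {x : ℝ} (hx : 0 ≤ x) : cos x ≤ 1 - x^2/2 + x^4/24 := by
  have h := aux_nonneg (f := fun t => (1 - t^2/2 + t^4/24) - Real.cos t)
    (f' := fun t => (Real.sin t - (t - t^3/6))) (fun t => by
      have := (((hasDerivAt_const t (1:ℝ)).sub ((hasDerivAt_pow 2 t).div_const 2)).add
        ((hasDerivAt_pow 4 t).div_const 24)).sub (Real.hasDerivAt_cos t)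
      exact this.congr_deriv (by simp; ring))
    (by simp) (fun t ht => by nlinarith [sin_ge3 ht]) hx
  linarith [h]

private lemma sin_le5 {x : ℝ} (hx : 0 ≤ x) : sin x ≤ x - x^3/6 + x^5/120 := by
  have h := aux_nonneg (f := fun t => (t - t^3/6 + t^5/120) - Real.sin t)
    (f' := fun t => (1 - t^2/2 + t^4/24) - Real.cos t) (fun t => by
      have := (((hasDerivAt_id t).sub ((hasDerivAt_pow 3 t).div_const 6)).add
        ((hasDerivAt_pow 5 t).div_const 120)).sub (Real.hasDerivAt_sin t)
      exact this.congr_deriv (by simp; ring))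
    (by simp) (fun t ht => by nlinarith [cos_le4 ht]) hx
  linarith [h]

private lemma cos_ge6 {x : ℝ} (hx : 0 ≤ x) : 1 - x^2/2 + x^4/24 - x^6/720 ≤ cos x := by
  have h := aux_nonneg (f := fun t => Real.cos t - (1 - t^2/2 + t^4/24 - t^6/720))
    (f' := fun t => (t - t^3/6 + t^5/120) - Real.sin t) (fun t => by
      have := (Real.hasDerivAt_cos t).sub ((((hasDerivAt_const t (1:ℝ)).sub
        ((hasDerivAt_pow 2 t).div_const 2)).add ((hasDerivAt_pow 4 t).div_const 24)).sub
        ((hasDerivAt_pow 6 t).div_const 720))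
      exact this.congr_deriv (by simp; ring))
    (by simp) (fun t ht => by nlinarith [sin_le5 ht]) hx
  linarith [h]

private lemma sin_ge7 {x : ℝ} (hx : 0 ≤ x) : x - x^3/6 + x^5/120 - x^7/5040 ≤ sin x := by
  have h := aux_nonneg (f := fun t => Real.sin t - (t - t^3/6 + t^5/120 - t^7/5040))
    (f' := fun t => Real.cos t - (1 - t^2/2 + t^4/24 - t^6/720)) (fun t => by
      have := (Real.hasDerivAt_sin t).sub ((((hasDerivAt_id t).sub
        ((hasDerivAt_pow 3 t).div_const 6)).add ((hasDerivAt_pow 5 t).div_const 120)).sub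
        ((hasDerivAt_pow 7 t).div_const 5040))
      exact this.congr_deriv (by simp; ring))
    (by simp) (fun t ht => by nlinarith [cos_ge6 ht]) hx
  linarith [h]

private lemma cos_le8 {x : ℝ} (hx : 0 ≤ x) :
    cos x ≤ 1 - x^2/2 + x^4/24 - x^6/720 + x^8/40320 := by
  have h := aux_nonneg (f := fun t => (1 - t^2/2 + t^4/24 - t^6/720 + t^8/40320) - Real.cos t)
    (f' := fun t => Real.sin t - (t - t^3/6 + t^5/120 - t^7/5040)) (fun t => by
      have := ((((((hasDerivAt_const t (1:ℝ)).sub ((hasDerivAt_pow 2 t).div_const 2)).add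
        ((hasDerivAt_pow 4 t).div_const 24)).sub ((hasDerivAt_pow 6 t).div_const 720)).add
        ((hasDerivAt_pow 8 t).div_const 40320))).sub (Real.hasDerivAt_cos t)
      exact this.congr_deriv (by simp; ring))
    (by simp) (fun t ht => by nlinarith [sin_ge7 ht]) hx
  linarith [h]

private lemma key_ineq {x : ℝ} (hx : 0 < x) (hx2 : x < π/2) :
    (2/3) * x^2 * sin x * (x - sin x) < (sin x - x * cos x)^2 := by
  have hxlt : x < 1.5708 := by
    have := Real.pi_lt_d6
    linarith
  have ht : x^2 < 2.4675 := by nlinarith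
  have h4 : x^4 < 6.0886 := by nlinarith
  have h6 : x^6 < 15.024 := by nlinarith
  have h8 : x^8 < 37.072 := by nlinarith
  have hs0 : 0 < sin x := Real.sin_pos_of_pos_of_lt_pi hx (by nlinarith [Real.pi_gt_three])
  have hc0 : 0 < cos x := Real.cos_pos_of_mem_Ioo ⟨by linarith, hx2⟩
  have pyth : sin x^2 + cos x^2 = 1 := Real.sin_sq_add_cos_sq x
  have hs1 : x - x^3/6 + x^5/120 - x^7/5040 ≤ sin x := sin_ge7 hx.le
  have hs2 : sin x ≤ x - x^3/6 + x^5/120 := sin_le5 hx.le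
  have hcC : cos x ≤ 1 - x^2/2 + x^4/24 - x^6/720 + x^8/40320 := cos_le8 hx.le
  have hCpos : (0:ℝ) < 1 - x^2/2 + x^4/24 - x^6/720 + x^8/40320 := lt_of_lt_of_le hc0 hcC
  have hQ : (0:ℝ) < 1 - x^2/6 + x^4/120 - x^6/5040 := by nlinarith
  have hslpos : (0:ℝ) < x - x^3/6 + x^5/120 - x^7/5040 := by nlinarith [mul_pos hx hQ]
  have hW : (0:ℝ) < 11/7560 - x^2/75600 - 31*x^4/1814400 + 37*x^6/50803200 - x^8/76204800 := by
    nlinarith [pow_pos hx 6]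
  have hval : (0:ℝ) < x^8 * (11/7560 - x^2/75600 - 31*x^4/1814400 + 37*x^6/50803200 - x^8/76204800) :=
    mul_pos (pow_pos hx 8) hW
  have h1 : 0 ≤ (sin x - (x - x^3/6 + x^5/120 - x^7/5040)) *
      (sin x + (x - x^3/6 + x^5/120 - x^7/5040)) * (1 - x^2/3) := by
    apply mul_nonneg (mul_nonneg (by linarith) (by linarith))
    nlinarith
  have h2 : 0 ≤ ((x - x^3/6 + x^5/120) - sin x) *
      ((2/3)*x^3 + 2*x*(1 - x^2/2 + x^4/24 - x^6/720 + x^8/40320)) := by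
    apply mul_nonneg (by linarith)
    have h2a := mul_pos hx hCpos
    have h2b := pow_pos hx 3
    linarith
  have h3 : 2*x*sin x*cos x ≤ 2*x*sin x*(1 - x^2/2 + x^4/24 - x^6/720 + x^8/40320) := by
    apply mul_le_mul_of_nonneg_left hcC
    positivity
  have hident : (sin x - x*cos x)^2 - (2/3)*x^2*sin x*(x - sin x) =
      x^8 * (11/7560 - x^2/75600 - 31*x^4/1814400 + 37*x^6/50803200 - x^8/76204800)
      + (sin x - (x - x^3/6 + x^5/120 - x^7/5040)) *
        (sin x + (x - x^3/6 + x^5/120 - x^7/5040)) * (1 - x^2/3)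
      + ((x - x^3/6 + x^5/120) - sin x) *
        ((2/3)*x^3 + 2*x*(1 - x^2/2 + x^4/24 - x^6/720 + x^8/40320))
      + (2*x*sin x*(1 - x^2/2 + x^4/24 - x^6/720 + x^8/40320) - 2*x*sin x*cos x)
      + x^2*(sin x^2 + cos x^2 - 1) := by ring
  nlinarith [hident, h1, h2, h3, hval, pyth]

private lemma D_pos {x : ℝ} (hx : 0 < x) (hx2 : x < π/2) : 0 < sin x - x * cos x := by
  have hxlt : x < 1.5708 := by have := Real.pi_lt_d6; linarith
  have ht : x^2 < 2.4675 := by nlinarith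
  have h4 : x^4 < 6.0886 := by nlinarith
  have h6 : x^6 < 15.024 := by nlinarith
  have hs1 : x - x^3/6 + x^5/120 - x^7/5040 ≤ sin x := sin_ge7 hx.le
  have hcC : cos x ≤ 1 - x^2/2 + x^4/24 - x^6/720 + x^8/40320 := cos_le8 hx.le
  have hxc : x * cos x ≤ x * (1 - x^2/2 + x^4/24 - x^6/720 + x^8/40320) :=
    mul_le_mul_of_nonneg_left hcC hx.le
  have hQ : (0:ℝ) < 1/3 - x^2/30 + x^4/840 - x^6/40320 := by nlinarith
  nlinarith [mul_pos (pow_pos hx 3) hQ]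

private lemma hasDeriv_g {x : ℝ} (hx : 0 < x) (hx2 : x < π/2) :
    HasDerivAt (fun x : ℝ => (sin x / x - (2 + cos x) / 3) / (sin x - x * cos x))
      ((((cos x * x - sin x)/x^2 + sin x/3) * (sin x - x * cos x)
        - (sin x / x - (2 + cos x)/3) * (x * sin x)) / (sin x - x * cos x)^2) x := by
  have hx0 : x ≠ 0 := hx.ne'
  have hD : (sin x - x * cos x) ≠ 0 := (D_pos hx hx2).ne'
  have hN : HasDerivAt (fun y : ℝ => sin y / y - (2 + cos y) / 3)
      ((cos x * x - sin x)/x^2 + sin x/3) x := by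
    have h1 : HasDerivAt (fun y : ℝ => sin y / y) ((cos x * x - sin x * 1)/x^2) x :=
      (Real.hasDerivAt_sin x).div (hasDerivAt_id x) hx0
    have h2 := ((hasDerivAt_const x (2:ℝ)).add (Real.hasDerivAt_cos x)).div_const 3
    have := h1.sub h2
    exact this.congr_deriv (by ring)
  have hDd : HasDerivAt (fun y : ℝ => sin y - y * cos y) (x * sin x) x := by
    have := (Real.hasDerivAt_sin x).sub ((hasDerivAt_id x).mul (Real.hasDerivAt_cos x))
    exact this.congr_deriv (by simp only [id_eq]; ring)
  exact hN.div hDd hD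

theorem g_strictAntiOn :
    StrictAntiOn (fun x : ℝ => (sin x / x - (2 + cos x) / 3) / (sin x - x * cos x)) (Ioo 0 (π / 2)) := by
  apply strictAntiOn_of_deriv_neg (convex_Ioo 0 (π/2))
  · intro x hx
    exact (hasDeriv_g hx.1 hx.2).differentiableAt.continuousAt.continuousWithinAt
  · rw [interior_Ioo]
    intro x hx
    obtain ⟨hx1, hx2⟩ := hx
    rw [(hasDeriv_g hx1 hx2).deriv]
    apply div_neg_of_neg_of_pos
    · have hkey := key_ineq hx1 hx2
      have hx2pos : (0:ℝ) < x^2 := pow_pos hx1 2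
      have hnum : x^2 * ((((cos x * x - sin x)/x^2 + sin x/3) * (sin x - x * cos x)
          - (sin x / x - (2 + cos x)/3) * (x * sin x)))
          = (2/3) * x^2 * sin x * (x - sin x) - (sin x - x * cos x)^2 := by
        field_simp
        ring
      nlinarith [hnum, hkey, hx2pos]
    · exact pow_pos (D_pos hx1 hx2) 2
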